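/- Let $n \ge 2$ and $\mu_i \in \mathbb{R}$, $\sigma_i > 0$ for $i=1,\dots,n$ with $\sum_{i=1}^n \sigma_i \ge 2\max_i \sigma_i$. Then the normal distributions $N(\mu_1,\sigma_1^2),\dots,N(\mu_n,\sigma_n^2)$ are jointly mixable: there exist jointly Gaussian random variables $X_i \sim N(\mu_i,\sigma_i^2)$ with $P(X_1+\cdots+X_n = \mu_1+\cdots+\mu_n) = 1$. -/

import Mathlib

open MeasureTheory ProbabilityTheory
open scoped ENNReal

noncomputable def P2 : Measure (ℝ × ℝ) := (gaussianReal 0 1).prod (gaussianReal 0 1)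

instance : IsProbabilityMeasure P2 := by unfold P2; infer_instance

lemma wd_prod (f g : ℝ → ℝ≥0∞) (hf : Measurable f) (hg : Measurable g)
    [SigmaFinite ((volume : Measure ℝ).withDensity f)]
    [SigmaFinite ((volume : Measure ℝ).withDensity g)] :
    ((volume : Measure ℝ).withDensity f).prod ((volume : Measure ℝ).withDensity g)
      = ((volume : Measure ℝ).prod volume).withDensity (fun z => f z.1 * g z.2) :=
  Measure.prod_eq fun s t hs ht => by
    rw [withDensity_apply _ (hs.prod ht), ← Measure.prod_restrict,
      lintegral_prod_mul hf.aemeasurable hg.aemeasurable,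
      withDensity_apply _ hs, withDensity_apply _ ht]

lemma map_wd {μ : Measure (ℝ × ℝ)} {g : ℝ × ℝ → ℝ × ℝ} (hg : Measurable g)
    {D : ℝ × ℝ → ℝ≥0∞} (hD : Measurable D) :
    (μ.withDensity (D ∘ g)).map g = (μ.map g).withDensity D := by
  ext s hs
  rw [Measure.map_apply hg hs, withDensity_apply _ (hg hs), withDensity_apply _ hs,
    setLIntegral_map hs hD hg]
  rfl

lemma P2_eq : P2 = ((volume : Measure ℝ).prod volume).withDensity
    (fun z => gaussianPDF 0 1 z.1 * gaussianPDF 0 1 z.2) := by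
  haveI : SigmaFinite ((volume : Measure ℝ).withDensity (gaussianPDF 0 1)) := by
    rw [← gaussianReal_of_var_ne_zero _ one_ne_zero]; infer_instance
  rw [P2, gaussianReal_of_var_ne_zero _ one_ne_zero,
    wd_prod _ _ (measurable_gaussianPDF 0 1) (measurable_gaussianPDF 0 1)]

noncomputable def rotL (c s : ℝ) : ℝ × ℝ →ₗ[ℝ] ℝ × ℝ :=
  Matrix.toLin (Module.Basis.finTwoProd ℝ) (Module.Basis.finTwoProd ℝ) !![c, -s; s, c]

lemma rotL_apply (c s : ℝ) (z : ℝ × ℝ) :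
    rotL c s z = (c * z.1 + -s * z.2, s * z.1 + c * z.2) :=
  Matrix.toLin_finTwoProd_apply c (-s) s c z

lemma rotL_det (c s : ℝ) : LinearMap.det (rotL c s) = c ^ 2 + s ^ 2 := by
  rw [rotL, LinearMap.det_toLin, Matrix.det_fin_two_of]; ring

lemma rotL_cont (c s : ℝ) : Continuous (rotL c s) :=
  (rotL c s).continuous_of_finiteDimensional

lemma map_rot_volume (c s : ℝ) (h : c ^ 2 + s ^ 2 = 1) :
    (volume : Measure (ℝ × ℝ)).map (rotL c s) = volume := by
  rw [Measure.map_linearMap_addHaar_eq_smul_addHaar _ (by rw [rotL_det, h]; norm_num),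
    rotL_det, h]
  norm_num

lemma gpdf_mul (a b : ℝ) : gaussianPDF 0 1 a * gaussianPDF 0 1 b =
    ENNReal.ofReal (((Real.sqrt (2 * Real.pi))⁻¹) ^ 2 * Real.exp (-(a ^ 2 + b ^ 2) / 2)) := by
  rw [gaussianPDF, gaussianPDF, ← ENNReal.ofReal_mul (gaussianPDFReal_nonneg 0 1 a)]
  congr 1
  simp only [gaussianPDFReal, NNReal.coe_one, mul_one, sub_zero]
  rw [show (-(a ^ 2 + b ^ 2) / 2) = (-a ^ 2 / 2) + (-b ^ 2 / 2) by ring, Real.exp_add, sq]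
  ring

lemma D_rot (c s : ℝ) (h : c ^ 2 + s ^ 2 = 1) (z : ℝ × ℝ) :
    gaussianPDF 0 1 (rotL c s z).1 * gaussianPDF 0 1 (rotL c s z).2
      = gaussianPDF 0 1 z.1 * gaussianPDF 0 1 z.2 := by
  rw [gpdf_mul, gpdf_mul, rotL_apply]
  have : (c * z.1 + -s * z.2) ^ 2 + (s * z.1 + c * z.2) ^ 2 = z.1 ^ 2 + z.2 ^ 2 := by
    nlinarith [h, sq_nonneg z.1, sq_nonneg z.2]
  simp only []
  rw [this]

lemma P2_rot (c s : ℝ) (h : c ^ 2 + s ^ 2 = 1) : P2.map (rotL c s) = P2 := by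
  have hD : Measurable (fun z : ℝ × ℝ => gaussianPDF 0 1 z.1 * gaussianPDF 0 1 z.2) :=
    ((measurable_gaussianPDF 0 1).comp measurable_fst).mul
      ((measurable_gaussianPDF 0 1).comp measurable_snd)
  rw [P2_eq, ← Measure.volume_eq_prod]
  conv_lhs => rw [show (fun z : ℝ × ℝ => gaussianPDF 0 1 z.1 * gaussianPDF 0 1 z.2)
    = (fun z : ℝ × ℝ => gaussianPDF 0 1 z.1 * gaussianPDF 0 1 z.2) ∘ (rotL c s)
    from funext fun z => (D_rot c s h z).symm]
  rw [map_wd (rotL_cont c s).measurable hD, map_rot_volume c s h]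

lemma P2_map_lin (α β : ℝ) : P2.map (fun z : ℝ × ℝ => α * z.1 + β * z.2)
    = gaussianReal 0 ((α ^ 2 + β ^ 2).toNNReal) := by
  rcases eq_or_ne (α ^ 2 + β ^ 2) 0 with h0 | h0
  · have hα : α = 0 := by nlinarith [sq_nonneg α, sq_nonneg β]
    have hβ : β = 0 := by nlinarith [sq_nonneg α, sq_nonneg β]
    subst hα; subst hβ
    norm_num
  · set r := Real.sqrt (α ^ 2 + β ^ 2) with hrdef
    have hrpos : 0 < r := Real.sqrt_pos.2 (lt_of_le_of_ne (by positivity) (Ne.symm h0))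
    have hr2 : r ^ 2 = α ^ 2 + β ^ 2 := Real.sq_sqrt (by positivity)
    set c := α / r with hc
    set s := -(β / r) with hs
    have hcs : c ^ 2 + s ^ 2 = 1 := by
      rw [hc, hs]
      field_simp
      exact hr2.symm
    have hcomp : (fun z : ℝ × ℝ => α * z.1 + β * z.2)
        = (fun x : ℝ => r * x) ∘ (Prod.fst ∘ (rotL c s)) := by
      funext z
      simp only [Function.comp_apply, rotL_apply, hc, hs]
      field_simp
    rw [hcomp, ← Measure.map_map (measurable_const_mul r)
        (measurable_fst.comp (rotL_cont c s).measurable),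
      ← Measure.map_map measurable_fst (rotL_cont c s).measurable,
      P2_rot c s hcs]
    have hfst : (P2.map Prod.fst) = gaussianReal 0 1 := by
      rw [P2, Measure.map_fst_prod]
      simp
    rw [hfst, gaussianReal_map_const_mul r]
    have h1 : r * 0 = 0 := mul_zero r
    have h2 : (⟨r ^ 2, sq_nonneg r⟩ : NNReal) * 1 = (α ^ 2 + β ^ 2).toNNReal := by
      ext
      simp only [NNReal.coe_mul, NNReal.coe_one, NNReal.coe_mk, mul_one]
      rw [hr2]
      exact (Real.coe_toNNReal _ (add_nonneg (sq_nonneg α) (sq_nonneg β))).symm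
    rw [h1]
    exact congrArg _ h2


lemma greedy {n : ℕ} (t B : ℝ) (ht : 0 ≤ t) (hB : 0 ≤ B) (f : Fin n → ℝ)
    (u : Finset (Fin n)) (hf : ∀ i ∈ u, 0 < f i ∧ f i ≤ B) :
    ∃ ε : Fin n → ℝ, (∀ i ∈ u, ε i = 1 ∨ ε i = -1) ∧
      (∑ i ∈ u, ε i * f i) ≤ t + B ∧
      t - (∑ i ∈ u, ε i * f i) ≤ max (t - ∑ i ∈ u, f i) B := by
  classical
  induction u using Finset.induction_on with
  | empty =>
    refine ⟨fun _ => 1, by simp, by simp; linarith, by simp⟩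
  | @insert a u' ha ih =>
    obtain ⟨ε, hε, hub, hlb⟩ := ih (fun i hi => hf i (Finset.mem_insert_of_mem hi))
    have hfa := hf a (Finset.mem_insert_self a u')
    set P := ∑ i ∈ u', ε i * f i with hP
    by_cases hPt : P ≤ t
    · refine ⟨fun i => if i = a then 1 else ε i, ?_, ?_, ?_⟩
      · intro i hi
        by_cases h : i = a
        · simp [h]
        · simp only [if_neg h]
          exact hε i ((Finset.mem_insert.mp hi).resolve_left h)
      all_goals
        have hs : ∑ i ∈ insert a u', (fun i => if i = a then (1:ℝ) else ε i) i * f i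
            = f a + P := by
          have h1 : (fun i => if i = a then (1:ℝ) else ε i) a * f a = f a := by simp
          have h2 : ∑ i ∈ u', (fun i => if i = a then (1:ℝ) else ε i) i * f i = P :=
            Finset.sum_congr rfl fun i hi => by
              simp [ne_of_mem_of_not_mem hi ha]
          rw [Finset.sum_insert ha, h1, h2]
        rw [hs]
      · linarith [hfa.2]
      · rw [Finset.sum_insert ha]
        rcases le_or_gt (t - P) B with h | h
        · exact le_max_of_le_right (by linarith [hfa.1])
        · have h2 : t - P ≤ t - ∑ i ∈ u', f i := by
            rcases le_max_iff.mp hlb with h' | h'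
            · exact h'
            · linarith
          exact le_max_of_le_left (by linarith)
    · refine ⟨fun i => if i = a then -1 else ε i, ?_, ?_, ?_⟩
      · intro i hi
        by_cases h : i = a
        · simp [h]
        · simp only [if_neg h]
          exact hε i ((Finset.mem_insert.mp hi).resolve_left h)
      all_goals
        have hs : ∑ i ∈ insert a u', (fun i => if i = a then (-1:ℝ) else ε i) i * f i
            = -f a + P := by
          have h1 : (fun i => if i = a then (-1:ℝ) else ε i) a * f a = -f a := by simp
          have h2 : ∑ i ∈ u', (fun i => if i = a then (-1:ℝ) else ε i) i * f i = P :=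
            Finset.sum_congr rfl fun i hi => by
              simp [ne_of_mem_of_not_mem hi ha]
          rw [Finset.sum_insert ha, h1, h2]
        rw [hs]
      · linarith [hfa.1]
      · exact le_max_of_le_right (by linarith [hfa.2, not_le.mp hPt])

lemma two_link (P a b : ℝ) (hP : 0 ≤ P) (hab : a - b ≤ P) (hba : b - a ≤ P) (hsum : P ≤ a + b) :
    ∃ x y : ℝ, x ^ 2 + y ^ 2 = a ^ 2 ∧ (P + x) ^ 2 + y ^ 2 = b ^ 2 := by
  rcases eq_or_lt_of_le hP with h0 | h0
  · have hab' : a = b := by linarith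
    exact ⟨a, 0, by ring, by rw [← h0, hab']; ring⟩
  · set x := (b ^ 2 - a ^ 2 - P ^ 2) / (2 * P) with hx
    have hy2 : 0 ≤ a ^ 2 - x ^ 2 := by
      have key : (2 * P) ^ 2 * (a ^ 2 - x ^ 2)
          = ((a + b - P) * (b + P - a)) * ((P + a - b) * (P + a + b)) := by
        rw [hx]
        field_simp
        ring
      have f1 : (0:ℝ) ≤ (a + b - P) * (b + P - a) :=
        mul_nonneg (by linarith) (by linarith)
      have f2 : (0:ℝ) ≤ (P + a - b) * (P + a + b) :=
        mul_nonneg (by linarith) (by linarith)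
      have h4 : (0:ℝ) < (2 * P) ^ 2 := by positivity
      nlinarith [key, h4, mul_nonneg f1 f2]
    refine ⟨x, Real.sqrt (a ^ 2 - x ^ 2), ?_, ?_⟩
    · rw [Real.sq_sqrt hy2]; ring
    · rw [Real.sq_sqrt hy2, hx]
      field_simp
      ring


lemma exists_vec (n : ℕ) (hn : 2 ≤ n) (σ : Fin n → ℝ) (hσ : ∀ i, 0 < σ i)
    (hmix : 2 * (⨆ i, σ i) ≤ ∑ i, σ i) :
    ∃ w : Fin n → ℝ × ℝ,
      (∀ i, (w i).1 ^ 2 + (w i).2 ^ 2 = σ i ^ 2) ∧ ∑ i, w i = 0 := by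
  classical
  have hn0 : 0 < n := by omega
  obtain ⟨j, -, hj⟩ := Finset.exists_max_image Finset.univ σ
    ⟨⟨0, hn0⟩, Finset.mem_univ _⟩
  have hj' : ∀ i, σ i ≤ σ j := fun i => hj i (Finset.mem_univ i)
  have hsupj : (⨆ i, σ i) = σ j := by
    haveI : Nonempty (Fin n) := ⟨⟨0, hn0⟩⟩
    exact le_antisymm (ciSup_le hj') (le_ciSup (Set.Finite.bddAbove (Set.finite_range σ)) j)
  have hsum2 : 2 * σ j ≤ ∑ i, σ i := hsupj ▸ hmix
  have herase_ne : (Finset.univ.erase j).Nonempty := by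
    rw [← Finset.card_pos, Finset.card_erase_of_mem (Finset.mem_univ j), Finset.card_univ,
      Fintype.card_fin]
    omega
  obtain ⟨k, hkmem, hk⟩ := Finset.exists_max_image (Finset.univ.erase j) σ herase_ne
  have hkj : k ≠ j := (Finset.mem_erase.mp hkmem).1
  have hkmax : ∀ i, i ≠ j → σ i ≤ σ k := fun i hi =>
    hk i (Finset.mem_erase.mpr ⟨hi, Finset.mem_univ i⟩)
  have hkltj : σ k ≤ σ j := hj' k
  set u : Finset (Fin n) := (Finset.univ.erase j).erase k with hu
  have hju : j ∉ u := fun h => (Finset.mem_erase.mp (Finset.mem_of_mem_erase h)).1 rfl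
  have hku : k ∉ u := fun h => (Finset.mem_erase.mp h).1 rfl
  have humem : ∀ i, i ≠ j → i ≠ k → i ∈ u := fun i h1 h2 =>
    Finset.mem_erase.mpr ⟨h2, Finset.mem_erase.mpr ⟨h1, Finset.mem_univ i⟩⟩
  obtain ⟨ε, hε, hub, hlb⟩ := greedy (σ j) (σ k) (le_of_lt (hσ j)) (le_of_lt (hσ k)) σ u
    (fun i hi => ⟨hσ i, hkmax i (Finset.mem_erase.mp (Finset.mem_of_mem_erase hi)).1⟩)
  set P := ∑ i ∈ u, ε i * σ i with hPdef
  have e2 : σ k + ∑ i ∈ u, σ i = ∑ i ∈ Finset.univ.erase j, σ i :=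
    Finset.add_sum_erase _ σ hkmem
  have e1 : σ j + ∑ i ∈ Finset.univ.erase j, σ i = ∑ i, σ i :=
    Finset.add_sum_erase _ σ (Finset.mem_univ j)
  have husum : ∑ i ∈ u, σ i = (∑ i, σ i) - σ j - σ k := by linarith
  have hPlb : σ j - σ k ≤ P := by
    have h1 : σ j - ∑ i ∈ u, σ i ≤ σ k := by rw [husum]; linarith
    have := hlb
    rcases le_max_iff.mp this with h | h
    · linarith
    · linarith
  have hP0 : 0 ≤ P := by linarith
  obtain ⟨x, y, hxy1, hxy2⟩ := two_link P (σ j) (σ k) hP0 (by linarith) (by linarith) hub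
  refine ⟨fun i => if i = j then (x, y) else if i = k then (-(P + x), -y)
    else (ε i * σ i, 0), fun i => ?_, ?_⟩
  · by_cases h1 : i = j
    · subst h1; simpa using hxy1
    · by_cases h2 : i = k
      · subst h2
        simp [if_neg h1]
        nlinarith [hxy2]
      · simp only [if_neg h1, if_neg h2]
        rcases hε i (humem i h1 h2) with h | h <;> · rw [h]; ring
  · set w : Fin n → ℝ × ℝ := fun i => if i = j then (x, y) else if i = k then (-(P + x), -y)
      else (ε i * σ i, 0) with hw
    have s2 : w k + ∑ i ∈ u, w i = ∑ i ∈ Finset.univ.erase j, w i :=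
      Finset.add_sum_erase _ w hkmem
    have s1 : w j + ∑ i ∈ Finset.univ.erase j, w i = ∑ i, w i :=
      Finset.add_sum_erase _ w (Finset.mem_univ j)
    have s3 : ∑ i ∈ u, w i = (P, 0) := by
      have : ∀ i ∈ u, w i = (ε i * σ i, 0) := by
        intro i hi
        have h2 : i ≠ k := (Finset.mem_erase.mp hi).1
        have h1 : i ≠ j := (Finset.mem_erase.mp (Finset.mem_of_mem_erase hi)).1
        simp only [hw, if_neg h1, if_neg h2]
      rw [Finset.sum_congr rfl this]
      apply Prod.ext
      · rw [Prod.fst_sum]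
      · rw [Prod.snd_sum]; simp
    have hwj : w j = (x, y) := by simp [hw]
    have hwk : w k = (-(P + x), -y) := by simp [hw, hkj]
    rw [← s1, ← s2, s3, hwj, hwk]
    rw [Prod.ext_iff]
    constructor
    · show x + (-(P + x) + P) = 0
      ring
    · show y + (-y + 0) = 0
      ring


lemma P2_map_affine (c α β : ℝ) :
    P2.map (fun z : ℝ × ℝ => c + (α * z.1 + β * z.2))
      = gaussianReal c ((α ^ 2 + β ^ 2).toNNReal) := by
  have hcomp : (fun z : ℝ × ℝ => c + (α * z.1 + β * z.2))
      = (fun x : ℝ => x + c) ∘ (fun z : ℝ × ℝ => α * z.1 + β * z.2) := by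
    funext z
    simp [add_comm]
  rw [hcomp, ← Measure.map_map (measurable_id'.add_const c) (by fun_prop), P2_map_lin,
    gaussianReal_map_add_const, zero_add]

/-- Normal distributions `N(μ i, σ i ^ 2)` with `∑ σ i ≥ 2 max σ i` are jointly mixable:
there is a jointly Gaussian coupling whose sum is a.s. constant. -/
theorem stmt12 (n : ℕ) (hn : 2 ≤ n) (m : Fin n → ℝ) (σ : Fin n → ℝ) (hσ : ∀ i, 0 < σ i)
    (hmix : 2 * (⨆ i, σ i) ≤ ∑ i, σ i) :
    ∃ ν : Measure (Fin n → ℝ), IsProbabilityMeasure ν ∧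
      (∀ a : Fin n → ℝ, ∃ (c : ℝ) (v : NNReal),
        ν.map (fun y => ∑ i, a i * y i) = gaussianReal c v) ∧
      (∀ i, ν.map (fun y => y i) = gaussianReal (m i) ((σ i ^ 2).toNNReal)) ∧
      ν {y | ∑ i, y i = ∑ i, m i} = 1 := by
  obtain ⟨w, hwnorm, hwsum⟩ := exists_vec n hn σ hσ hmix
  set f : ℝ × ℝ → (Fin n → ℝ) := fun z i => m i + ((w i).1 * z.1 + (w i).2 * z.2) with hf
  have hfm : Measurable f := measurable_pi_lambda _ fun i => by fun_prop
  have key : ∀ (a : Fin n → ℝ),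
      (P2.map f).map (fun y => ∑ i, a i * y i)
        = gaussianReal (∑ i, a i * m i)
          (((∑ i, a i * (w i).1) ^ 2 + (∑ i, a i * (w i).2) ^ 2).toNNReal) := by
    intro a
    have hsm : Measurable (fun y : Fin n → ℝ => ∑ i, a i * y i) := by fun_prop
    rw [Measure.map_map hsm hfm]
    have hcomp : (fun y : Fin n → ℝ => ∑ i, a i * y i) ∘ f
        = fun z : ℝ × ℝ => (∑ i, a i * m i)
            + ((∑ i, a i * (w i).1) * z.1 + (∑ i, a i * (w i).2) * z.2) := by
      funext z
      simp only [Function.comp_apply, hf]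
      rw [Finset.sum_congr rfl (fun i _ => show
        a i * (m i + ((w i).1 * z.1 + (w i).2 * z.2))
          = a i * m i + ((a i * (w i).1) * z.1 + (a i * (w i).2) * z.2) by ring),
        Finset.sum_add_distrib, Finset.sum_add_distrib, ← Finset.sum_mul, ← Finset.sum_mul]
    rw [hcomp, P2_map_affine]
  refine ⟨P2.map f, Measure.isProbabilityMeasure_map hfm.aemeasurable, ?_, ?_, ?_⟩
  · intro a
    exact ⟨_, _, key a⟩
  · intro i
    rw [Measure.map_map (measurable_pi_apply i) hfm]
    have hcomp : (fun y : Fin n → ℝ => y i) ∘ f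
        = fun z : ℝ × ℝ => m i + ((w i).1 * z.1 + (w i).2 * z.2) := rfl
    rw [hcomp, P2_map_affine, hwnorm i]
  · have h1 : ∑ i, (w i).1 = 0 := by rw [← Prod.fst_sum, hwsum]; rfl
    have h2 : ∑ i, (w i).2 = 0 := by rw [← Prod.snd_sum, hwsum]; rfl
    have hset : MeasurableSet {y : Fin n → ℝ | ∑ i, y i = ∑ i, m i} :=
      measurableSet_eq_fun (by fun_prop) measurable_const
    rw [Measure.map_apply hfm hset]
    have hpre : f ⁻¹' {y | ∑ i, y i = ∑ i, m i} = Set.univ := by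
      ext z
      simp only [Set.mem_preimage, Set.mem_setOf_eq, Set.mem_univ, iff_true, hf]
      rw [Finset.sum_add_distrib]
      have : ∑ i, ((w i).1 * z.1 + (w i).2 * z.2) = 0 := by
        rw [Finset.sum_add_distrib, ← Finset.sum_mul, ← Finset.sum_mul, h1, h2]
        ring
      rw [this, add_zero]
    rw [hpre]
    exact measure_univ
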